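/- Let ε > 0 and δ ≤ min(1, ε), and let W*_1, ..., W*_n be i.i.d. Uniform[−1,1] random variables with n ≥ C·log(2/δ) for a sufficiently large absolute constant C. Then with probability at least 1 − δ, for every W ∈ [−1/2, 1/2] there exists a subset S ⊆ {1, ..., n} such that |W − Σ_{i∈S} W*_i| ≤ ε. -/

import Mathlib

open MeasureTheory ENNReal

/-- The uniform probability measure on `[-1, 1]`. -/
noncomputable def uniformNeg11 : Measure ℝ :=
  (2 : ENNReal)⁻¹ • volume.restrict (Set.Icc (-1 : ℝ) 1)

instance : IsProbabilityMeasure uniformNeg11 := by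
  constructor
  simp [uniformNeg11, Real.volume_Icc]
  rw [show (1:ℝ) + 1 = 2 by ring, ENNReal.ofReal_ofNat, ENNReal.inv_mul_cancel] <;> simp

namespace RSS

/-- The target interval. -/
def II : Set ℝ := Set.Icc (-(1 : ℝ)/2) (1/2)

/-- Lebesgue measure restricted to the target interval. -/
noncomputable def nu : Measure ℝ := volume.restrict II

instance : IsProbabilityMeasure nu := by
  constructor
  simp [nu, II, Real.volume_Icc]
  norm_num

/-- Covered set: points within `r` of some subset sum. -/
def T (r : ℝ) {n : ℕ} (W : Fin n → ℝ) : Set ℝ :=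
  {w | ∃ S : Finset (Fin n), |w - ∑ i ∈ S, W i| ≤ r}

noncomputable def Phi (r : ℝ) {n : ℕ} (W : Fin n → ℝ) : ENNReal :=
  nu (T r W)ᶜ / nu (T r W)

lemma measurableSet_T (r : ℝ) {n : ℕ} (W : Fin n → ℝ) : MeasurableSet (T r W) := by
  have : T r W = ⋃ S : Finset (Fin n), Set.Icc ((∑ i ∈ S, W i) - r) ((∑ i ∈ S, W i) + r) := by
    ext w
    simp only [T, Set.mem_setOf_eq, Set.mem_iUnion, Set.mem_Icc, abs_le]
    constructor <;> rintro ⟨S, h⟩ <;> exact ⟨S, by constructor <;> linarith [h.1, h.2]⟩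
  rw [this]
  exact MeasurableSet.iUnion fun S => measurableSet_Icc

lemma cov_ge (r : ℝ) (hr : 0 < r) (hr2 : r ≤ 1/4) {n : ℕ} (W : Fin n → ℝ) :
    ENNReal.ofReal (2*r) ≤ nu (T r W) := by
  have hsub : Set.Icc (-r) r ⊆ T r W := by
    intro w hw
    exact ⟨∅, by simpa [abs_le] using ⟨hw.1, hw.2⟩⟩
  calc ENNReal.ofReal (2*r) = nu (Set.Icc (-r) r) := by
        rw [nu, Measure.restrict_apply' (by exact measurableSet_Icc)]
        rw [show Set.Icc (-r) r ∩ II = Set.Icc (-r) r from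
          Set.inter_eq_left.mpr (fun w hw => ⟨by simp at hw ⊢; linarith [hw.1], by
            simp at hw ⊢; linarith [hw.2]⟩)]
        rw [Real.volume_Icc]
        congr 1
        ring
    _ ≤ nu (T r W) := measure_mono hsub

lemma T_cons (r : ℝ) {n : ℕ} (x : ℝ) (W : Fin n → ℝ) :
    T r (Fin.cons x W) = T r W ∪ {w | w - x ∈ T r W} := by
  have hdec : ∀ S : Finset (Fin (n+1)), ∃ S' : Finset (Fin n),
      (∑ i ∈ S, (Fin.cons x W : Fin (n+1) → ℝ) i)
        = (if (0 : Fin (n+1)) ∈ S then x else 0) + ∑ j ∈ S', W j := by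
    intro S
    refine ⟨S.preimage Fin.succ (Fin.succ_injective n).injOn, ?_⟩
    have herase : S.erase 0 = (S.preimage Fin.succ (Fin.succ_injective n).injOn).map
        ⟨Fin.succ, Fin.succ_injective n⟩ := by
      ext i
      simp only [Finset.mem_erase, Finset.mem_map, Finset.mem_preimage,
        Function.Embedding.coeFn_mk]
      constructor
      · rintro ⟨h0, hS⟩
        obtain ⟨j, rfl⟩ := Fin.exists_succ_eq.mpr h0
        exact ⟨j, hS, rfl⟩
      · rintro ⟨j, hj, rfl⟩
        exact ⟨Fin.succ_ne_zero j, hj⟩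
    by_cases h0 : (0 : Fin (n+1)) ∈ S
    · rw [if_pos h0, ← Finset.sum_erase_add _ _ h0, herase, Finset.sum_map]
      simp [add_comm]
    · rw [if_neg h0]
      conv_lhs => rw [← Finset.erase_eq_of_notMem h0, herase]
      rw [Finset.sum_map]
      simp
  ext w
  simp only [T, Set.mem_setOf_eq, Set.mem_union]
  constructor
  · rintro ⟨S, hS⟩
    obtain ⟨S', hS'⟩ := hdec S
    by_cases h0 : (0 : Fin (n+1)) ∈ S
    · right
      exact ⟨S', by rw [hS', if_pos h0] at hS; convert hS using 2; ring⟩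
    · left
      exact ⟨S', by rw [hS', if_neg h0] at hS; convert hS using 2; ring⟩
  · rintro (⟨S', hS'⟩ | ⟨S', hS'⟩)
    · refine ⟨S'.map ⟨Fin.succ, Fin.succ_injective n⟩, ?_⟩
      rw [Finset.sum_map]
      simpa using hS'
    · refine ⟨insert 0 (S'.map ⟨Fin.succ, Fin.succ_injective n⟩), ?_⟩
      rw [Finset.sum_insert (by simp [Fin.succ_ne_zero]), Finset.sum_map]
      simp only [Function.Embedding.coeFn_mk, Fin.cons_succ, Fin.cons_zero]
      convert hS' using 2
      ring

lemma measurable_nuT (r : ℝ) (n : ℕ) :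
    Measurable (fun W : Fin n → ℝ => nu (T r W)) := by
  have hD : MeasurableSet {p : (Fin n → ℝ) × ℝ | p.2 ∈ T r p.1} := by
    have : {p : (Fin n → ℝ) × ℝ | p.2 ∈ T r p.1}
        = ⋃ S : Finset (Fin n), {p : (Fin n → ℝ) × ℝ | |p.2 - ∑ i ∈ S, p.1 i| ≤ r} := by
      ext p; simp [T]
    rw [this]
    refine MeasurableSet.iUnion fun S => ?_
    have hcont : Continuous fun p : (Fin n → ℝ) × ℝ => |p.2 - ∑ i ∈ S, p.1 i| :=
      (continuous_snd.sub (continuous_finset_sum S fun i _ =>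
        (continuous_apply i).comp continuous_fst)).abs
    exact measurableSet_le hcont.measurable measurable_const
  have h := measurable_measure_prodMk_left (ν := nu) hD
  have heq : (fun W : Fin n → ℝ => nu (T r W))
      = fun W : Fin n → ℝ => nu (Prod.mk W ⁻¹' {p : (Fin n → ℝ) × ℝ | p.2 ∈ T r p.1}) := by
    funext W
    rw [Set.preimage_setOf_eq]
    rfl
  rw [heq]; exact h

lemma measurable_nuTc (r : ℝ) (n : ℕ) :
    Measurable (fun W : Fin n → ℝ => nu (T r W)ᶜ) := by
  have hD : MeasurableSet {p : (Fin n → ℝ) × ℝ | p.2 ∈ T r p.1} := by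
    have : {p : (Fin n → ℝ) × ℝ | p.2 ∈ T r p.1}
        = ⋃ S : Finset (Fin n), {p : (Fin n → ℝ) × ℝ | |p.2 - ∑ i ∈ S, p.1 i| ≤ r} := by
      ext p; simp [T]
    rw [this]
    refine MeasurableSet.iUnion fun S => ?_
    have hcont : Continuous fun p : (Fin n → ℝ) × ℝ => |p.2 - ∑ i ∈ S, p.1 i| :=
      (continuous_snd.sub (continuous_finset_sum S fun i _ =>
        (continuous_apply i).comp continuous_fst)).abs
    exact measurableSet_le hcont.measurable measurable_const
  have h := measurable_measure_prodMk_left (ν := nu) hD.compl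
  have heq : (fun W : Fin n → ℝ => nu (T r W)ᶜ)
      = fun W : Fin n → ℝ => nu (Prod.mk W ⁻¹' {p : (Fin n → ℝ) × ℝ | p.2 ∈ T r p.1}ᶜ) := by
    funext W
    rw [Set.preimage_compl, Set.preimage_setOf_eq]
    rfl
  rw [heq]; exact h

-- the expected-gain computation
lemma gain_integral (A B : Set ℝ) (hAm : MeasurableSet A) (hBm : MeasurableSet B)
    (hA : A ⊆ II) (hB : B ⊆ II) :
    ∫⁻ x, volume (A ∩ {w | w - x ∈ B}) ∂uniformNeg11 = 2⁻¹ * (volume A * volume B) := by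
  have hBshift : ∀ x : ℝ, MeasurableSet {w : ℝ | w - x ∈ B} := fun x =>
    hBm.preimage (measurable_id.sub measurable_const)
  set g : ℝ → ℝ≥0∞ := fun x => volume (A ∩ {w | w - x ∈ B}) with hgdef
  have hsupp : ∀ x : ℝ, x ∉ Set.Icc (-1:ℝ) 1 → g x = 0 := by
    intro x hx
    rw [Set.mem_Icc, not_and_or, not_le, not_le] at hx
    rcases hx with hx | hx
    · have hnull : volume (Set.Icc (-(1:ℝ)/2) (x + 1/2)) = 0 := by
        rw [Real.volume_Icc]
        apply ENNReal.ofReal_eq_zero.mpr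
        linarith
      refine measure_mono_null ?_ hnull
      rintro w ⟨hw1, hw2⟩
      have h1 := (hA hw1).1
      have h2 := (hB hw2).2
      exact ⟨h1, by linarith⟩
    · have hnull : volume (Set.Icc (x - 1/2) (1/2:ℝ)) = 0 := by
        rw [Real.volume_Icc]
        apply ENNReal.ofReal_eq_zero.mpr
        linarith
      refine measure_mono_null ?_ hnull
      rintro w ⟨hw1, hw2⟩
      have h1 := (hA hw1).2
      have h2 := (hB hw2).1
      exact ⟨by linarith, h1⟩
  have hfin : volume B ≠ ⊤ := by
    refine (lt_of_le_of_lt (measure_mono hB) ?_).ne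
    rw [II, Real.volume_Icc]
    exact ENNReal.ofReal_lt_top
  have hF : ∀ x, g x = ∫⁻ w, A.indicator 1 w * B.indicator 1 (w - x) ∂volume := by
    intro x
    rw [hgdef]
    simp only
    rw [← lintegral_indicator_one (hAm.inter (hBshift x))]
    congr 1
    funext w
    by_cases h1 : w ∈ A <;> by_cases h2 : w - x ∈ B <;>
      simp [Set.indicator, h1, h2]
  have htone : ∫⁻ x, g x ∂volume = volume A * volume B := by
    have hswap : ∫⁻ x, ∫⁻ w, A.indicator 1 w * B.indicator 1 (w - x) ∂volume ∂volume
        = ∫⁻ w, ∫⁻ x, A.indicator 1 w * B.indicator 1 (w - x) ∂volume ∂volume := by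
      apply lintegral_lintegral_swap
      apply Measurable.aemeasurable
      exact ((measurable_const.indicator hAm).comp measurable_snd).mul
        ((measurable_const.indicator hBm).comp (measurable_snd.sub measurable_fst))
    calc ∫⁻ x, g x ∂volume
        = ∫⁻ x, ∫⁻ w, A.indicator 1 w * B.indicator 1 (w - x) ∂volume ∂volume := by
          simp_rw [hF]
      _ = ∫⁻ w, ∫⁻ x, A.indicator 1 w * B.indicator 1 (w - x) ∂volume ∂volume := hswap
      _ = ∫⁻ w, A.indicator 1 w * volume B ∂volume := by
          congr 1
          funext w
          have hne : A.indicator (1 : ℝ → ℝ≥0∞) w ≠ ⊤ := by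
            by_cases h : w ∈ A <;> simp [Set.indicator, h]
          rw [lintegral_const_mul' _ _ hne]
          congr 1
          have hmeas : Measurable (B.indicator (1 : ℝ → ENNReal)) :=
            measurable_const.indicator hBm
          have hmp := (Measure.measurePreserving_sub_left (volume : Measure ℝ) w).lintegral_comp
            hmeas
          exact hmp.trans (lintegral_indicator_one hBm)
      _ = (∫⁻ w, A.indicator 1 w ∂volume) * volume B := lintegral_mul_const' _ _ hfin
      _ = volume A * volume B := by rw [lintegral_indicator_one hAm]
  have hsplit : ∫⁻ x, g x ∂volume
      = ∫⁻ x in Set.Icc (-1:ℝ) 1, g x ∂volume + ∫⁻ x in (Set.Icc (-1:ℝ) 1)ᶜ, g x ∂volume :=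
    (lintegral_add_compl g measurableSet_Icc).symm
  have hzero : ∫⁻ x in (Set.Icc (-1:ℝ) 1)ᶜ, g x ∂volume = 0 := by
    rw [← lintegral_zero (μ := volume.restrict (Set.Icc (-1:ℝ) 1)ᶜ)]
    apply lintegral_congr_ae
    rw [Filter.EventuallyEq, ae_restrict_iff' measurableSet_Icc.compl]
    exact Filter.Eventually.of_forall hsupp
  have huni : ∫⁻ x, g x ∂uniformNeg11 = 2⁻¹ * ∫⁻ x in Set.Icc (-1:ℝ) 1, g x ∂volume := by
    rw [uniformNeg11, lintegral_smul_measure, smul_eq_mul]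
  rw [huni]
  congr 1
  rw [← htone, hsplit, hzero, add_zero]

-- the real inequality behind the pointwise bound
lemma real_ptwise (U C G : ℝ) (hC : 0 < C) (hG0 : 0 ≤ G) (hGU : G ≤ U) (hGC : G ≤ C) :
    (U - G)/(C + G) + (G + U*G/(2*C))/C ≤ (U + G*G/(2*C))/C := by
  have hCG : 0 < C + G := by linarith
  have hkey : 0 ≤ G * (U - G) * (C - G) := by
    apply mul_nonneg (mul_nonneg hG0 (by linarith)) (by linarith)
  rw [div_add_div _ _ hCG.ne' hC.ne', div_le_div_iff₀ (mul_pos hCG hC) hC]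
  have h2C : (0:ℝ) < 2 * C := by linarith
  field_simp
  nlinarith [hkey, hC, hCG, mul_pos hCG hC]

lemma step (T : Set ℝ) (hT : MeasurableSet T) (hc : nu T ≠ 0) :
    ∫⁻ x, nu (T ∪ {w | w - x ∈ T})ᶜ / nu (T ∪ {w | w - x ∈ T}) ∂uniformNeg11
      ≤ ENNReal.ofReal (3/4) * (nu Tᶜ / nu T) := by
  set c := nu T with hcdef
  set u := nu Tᶜ with hudef
  have hcu : c + u = 1 := by
    rw [hcdef, hudef, measure_add_measure_compl hT, measure_univ]
  have hcne : c ≠ ⊤ := measure_ne_top nu T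
  have hune : u ≠ ⊤ := measure_ne_top nu _
  -- real versions
  set C := c.toReal with hCdef
  set U := u.toReal with hUdef
  have hcC : c = ENNReal.ofReal C := (ENNReal.ofReal_toReal hcne).symm
  have huU : u = ENNReal.ofReal U := (ENNReal.ofReal_toReal hune).symm
  have hCpos : 0 < C := ENNReal.toReal_pos hc hcne
  have hU0 : 0 ≤ U := ENNReal.toReal_nonneg
  have hCU1 : C + U = 1 := by
    rw [hCdef, hUdef, ← ENNReal.toReal_add hcne hune, hcu, ENNReal.toReal_one]
  -- sets
  set A := II ∩ Tᶜ with hAdef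
  set B := II ∩ T with hBdef
  have hAm : MeasurableSet A := (measurableSet_Icc (a := (-(1:ℝ)/2)) (b := (1/2))).inter hT.compl
  have hBm : MeasurableSet B := (measurableSet_Icc (a := (-(1:ℝ)/2)) (b := (1/2))).inter hT
  have hA : volume A = u := by
    rw [hudef, nu, Measure.restrict_apply hT.compl, Set.inter_comm, hAdef]
  have hB : volume B = c := by
    rw [hcdef, nu, Measure.restrict_apply hT, Set.inter_comm, hBdef]
  have hBshift : ∀ x : ℝ, MeasurableSet {w : ℝ | w - x ∈ B} := fun x =>
    hBm.preimage (measurable_id.sub measurable_const)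
  set g : ℝ → ℝ≥0∞ := fun x => volume (A ∩ {w | w - x ∈ B}) with hgdef
  -- measurability of g
  have hgm : Measurable g := by
    have hD : MeasurableSet {p : ℝ × ℝ | p.2 ∈ A ∧ p.2 - p.1 ∈ B} :=
      (hAm.preimage measurable_snd).inter (hBm.preimage (measurable_snd.sub measurable_fst))
    have h := measurable_measure_prodMk_left (ν := (volume : Measure ℝ)) hD
    have heq : g = fun x : ℝ => volume (Prod.mk x ⁻¹' {p : ℝ × ℝ | p.2 ∈ A ∧ p.2 - p.1 ∈ B}) := by
      funext x
      rfl
    rw [heq]; exact h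
  -- bounds on g
  have hgu : ∀ x, g x ≤ u := fun x => le_of_le_of_eq (measure_mono Set.inter_subset_left) hA
  have hgc : ∀ x, g x ≤ c := by
    intro x
    refine le_trans (measure_mono Set.inter_subset_right) (le_of_eq ?_)
    have hsh : {w : ℝ | w - x ∈ B} = (fun w => w + (-x)) ⁻¹' B := by
      ext w; simp [sub_eq_add_neg]
    rw [hsh, measure_preimage_add_right, hB]
  have hgne : ∀ x, g x ≠ ⊤ := fun x => (lt_of_le_of_lt (hgc x) hcne.lt_top).ne
  -- expected gain
  have hEg : ∫⁻ x, g x ∂uniformNeg11 = 2⁻¹ * (u * c) := by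
    rw [hgdef, gain_integral A B hAm hBm Set.inter_subset_left Set.inter_subset_left, hA, hB]
  -- pointwise domination of the new ratio
  have hstar : ∀ x : ℝ, nu (T ∪ {w | w - x ∈ T})ᶜ / nu (T ∪ {w | w - x ∈ T})
      ≤ (u - g x) / (c + g x) := by
    intro x
    have hTx : MeasurableSet (T ∪ {w : ℝ | w - x ∈ T}) :=
      hT.union (hT.preimage (measurable_id.sub measurable_const))
    have hlow : c + g x ≤ nu (T ∪ {w | w - x ∈ T}) := by
      have hdisj : Disjoint B (A ∩ {w | w - x ∈ B}) := by
        rw [Set.disjoint_left]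
        rintro w hwB ⟨hwA, _⟩
        exact hwA.2 hwB.2
      have hsub : B ∪ (A ∩ {w | w - x ∈ B}) ⊆ (T ∪ {w | w - x ∈ T}) ∩ II := by
        rintro w (⟨hw1, hw2⟩ | ⟨⟨hw1, _⟩, hw3⟩)
        · exact ⟨Or.inl hw2, hw1⟩
        · exact ⟨Or.inr hw3.2, hw1⟩
      calc c + g x = volume B + volume (A ∩ {w | w - x ∈ B}) := by rw [hB]
        _ = volume (B ∪ (A ∩ {w | w - x ∈ B})) :=
            (measure_union hdisj (hAm.inter (hBshift x))).symm
        _ ≤ volume ((T ∪ {w | w - x ∈ T}) ∩ II) := measure_mono hsub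
        _ = nu (T ∪ {w | w - x ∈ T}) := by rw [nu, Measure.restrict_apply hTx]
    have hup : nu (T ∪ {w | w - x ∈ T})ᶜ ≤ u - g x := by
      rw [measure_compl hTx (measure_ne_top nu _), measure_univ]
      refine le_trans (tsub_le_tsub_left hlow 1) (le_of_eq ?_)
      rw [← hcu, tsub_add_eq_tsub_tsub]
      congr 1
      exact ENNReal.add_sub_cancel_left hcne
    exact ENNReal.div_le_div hup hlow
  -- abbreviations
  set q : ℝ≥0∞ := ENNReal.ofReal (3/4) with hqdef
  set J : ℝ → ℝ≥0∞ := fun x => (g x + u * g x/(2*c))/c with hJdef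
  set k1 : ℝ≥0∞ := (1 + u/(2*c)) * c⁻¹ with hk1def
  set k2 : ℝ≥0∞ := (2*c)⁻¹ * c⁻¹ with hk2def
  have h2cne : (2:ℝ≥0∞)*c ≠ 0 := mul_ne_zero (by norm_num) hc
  have hcinvne : c⁻¹ ≠ ⊤ := ENNReal.inv_ne_top.mpr hc
  have h2cinvne : (2*c)⁻¹ ≠ ⊤ := ENNReal.inv_ne_top.mpr h2cne
  have hudivne : u/(2*c) ≠ ⊤ := (ENNReal.div_lt_top hune h2cne).ne
  have hk1ne : k1 ≠ ⊤ := ENNReal.mul_ne_top (ENNReal.add_ne_top.mpr ⟨ENNReal.one_ne_top, hudivne⟩) hcinvne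
  have hk2ne : k2 ≠ ⊤ := ENNReal.mul_ne_top h2cinvne hcinvne
  -- pointwise key inequality
  have key : ∀ x : ℝ, (u - g x)/(c + g x) + J x ≤ (u + g x * g x/(2*c))/c := by
    intro x
    set G := (g x).toReal with hGdef
    have hgG : g x = ENNReal.ofReal G := (ENNReal.ofReal_toReal (hgne x)).symm
    have hG0 : 0 ≤ G := ENNReal.toReal_nonneg
    have hGU : G ≤ U := ENNReal.toReal_mono hune (hgu x)
    have hGC : G ≤ C := ENNReal.toReal_mono hcne (hgc x)
    have e1 : (u - g x)/(c + g x) = ENNReal.ofReal ((U - G)/(C + G)) := by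
      rw [huU, hgG, hcC, ← ENNReal.ofReal_sub U hG0, ← ENNReal.ofReal_add (by positivity) hG0,
        ← ENNReal.ofReal_div_of_pos (by positivity)]
    have e2 : J x = ENNReal.ofReal ((G + U*G/(2*C))/C) := by
      rw [hJdef]
      simp only
      rw [huU, hgG, hcC, show (2:ℝ≥0∞) = ENNReal.ofReal 2 from (ENNReal.ofReal_ofNat 2).symm,
        ← ENNReal.ofReal_mul (by norm_num : (0:ℝ) ≤ 2), ← ENNReal.ofReal_mul hU0,
        ← ENNReal.ofReal_div_of_pos (by positivity),
        ← ENNReal.ofReal_add hG0 (div_nonneg (mul_nonneg hU0 hG0) (by linarith)),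
        ← ENNReal.ofReal_div_of_pos hCpos]
    have e3 : (u + g x * g x/(2*c))/c = ENNReal.ofReal ((U + G*G/(2*C))/C) := by
      rw [huU, hgG, hcC, show (2:ℝ≥0∞) = ENNReal.ofReal 2 from (ENNReal.ofReal_ofNat 2).symm,
        ← ENNReal.ofReal_mul (by norm_num : (0:ℝ) ≤ 2), ← ENNReal.ofReal_mul hG0,
        ← ENNReal.ofReal_div_of_pos (by positivity),
        ← ENNReal.ofReal_add hU0 (div_nonneg (mul_nonneg hG0 hG0) (by linarith)),
        ← ENNReal.ofReal_div_of_pos hCpos]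
    rw [e1, e2, e3, ← ENNReal.ofReal_add
      (div_nonneg (by linarith) (by linarith))
      (div_nonneg (by positivity) hCpos.le)]
    exact ENNReal.ofReal_le_ofReal (real_ptwise U C G hCpos hG0 hGU hGC)
  -- measurability of J
  have hJm : Measurable J := by
    apply Measurable.div _ measurable_const
    exact hgm.add ((hgm.const_mul u).div measurable_const)
  set K : ℝ≥0∞ := ∫⁻ x, J x ∂uniformNeg11 with hKdef
  -- value of K
  have hJeq : ∀ x, J x = g x * k1 := by
    intro x
    rw [hJdef, hk1def]
    simp only
    rw [← mul_assoc, div_eq_mul_inv (a := g x + u * g x/(2*c))]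
    congr 1
    rw [mul_add, mul_one, mul_comm u (g x), mul_div_assoc]
  have hK : K = (2⁻¹ * (u * c)) * k1 := by
    rw [hKdef]
    simp_rw [hJeq]
    rw [lintegral_mul_const' k1 _ hk1ne, hEg]
  have hKne : K ≠ ⊤ := by
    rw [hK]
    exact ENNReal.mul_ne_top (ENNReal.mul_ne_top (by norm_num)
      (ENNReal.mul_ne_top hune hcne)) hk1ne
  -- the integral chain
  have hgg : ∫⁻ x, g x * g x ∂uniformNeg11 ≤ c * (2⁻¹ * (u * c)) := by
    calc ∫⁻ x, g x * g x ∂uniformNeg11 ≤ ∫⁻ x, c * g x ∂uniformNeg11 :=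
          lintegral_mono fun x => mul_le_mul_left (hgc x) (g x)
      _ = c * ∫⁻ x, g x ∂uniformNeg11 := lintegral_const_mul' c _ hcne
      _ = c * (2⁻¹ * (u * c)) := by rw [hEg]
  have hRHSval : ∫⁻ x, (u + g x * g x/(2*c))/c ∂uniformNeg11
      = u/c + (∫⁻ x, g x * g x ∂uniformNeg11) * k2 := by
    have hptw : ∀ x : ℝ, (u + g x * g x/(2*c))/c = u/c + (g x * g x) * k2 := by
      intro x
      rw [ENNReal.add_div]
      congr 1
      rw [hk2def, div_eq_mul_inv (a := g x * g x/(2*c)),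
        div_eq_mul_inv (a := g x * g x), mul_assoc]
    simp_rw [hptw]
    rw [lintegral_add_left measurable_const, lintegral_const, measure_univ, mul_one,
      lintegral_mul_const' k2 _ hk2ne]
  have hchain : (∫⁻ x, nu (T ∪ {w | w - x ∈ T})ᶜ / nu (T ∪ {w | w - x ∈ T}) ∂uniformNeg11) + K
      ≤ (u/c + (c * (2⁻¹ * (u * c))) * k2) := by
    calc (∫⁻ x, nu (T ∪ {w | w - x ∈ T})ᶜ / nu (T ∪ {w | w - x ∈ T}) ∂uniformNeg11) + K
        ≤ (∫⁻ x, (u - g x)/(c + g x) ∂uniformNeg11) + K :=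
          add_le_add_left (lintegral_mono hstar) K
      _ = ∫⁻ x, ((u - g x)/(c + g x) + J x) ∂uniformNeg11 :=
          (lintegral_add_right _ hJm).symm
      _ ≤ ∫⁻ x, (u + g x * g x/(2*c))/c ∂uniformNeg11 := lintegral_mono key
      _ = u/c + (∫⁻ x, g x * g x ∂uniformNeg11) * k2 := hRHSval
      _ ≤ u/c + (c * (2⁻¹ * (u * c))) * k2 :=
          add_le_add_right (mul_le_mul_left hgg k2) _
  -- final numeric inequality
  have hFIN : u/c + (c * (2⁻¹ * (u * c))) * k2 ≤ q * (u/c) + K := by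
    rw [hK]
    have h2of : (2:ℝ≥0∞) = ENNReal.ofReal 2 := (ENNReal.ofReal_ofNat 2).symm
    have h2inv : (2:ℝ≥0∞)⁻¹ = ENNReal.ofReal 2⁻¹ := by
      rw [h2of, ← ENNReal.ofReal_inv_of_pos (by norm_num)]
    have h2C : (0:ℝ) < 2*C := by linarith
    have hdivval : u/c = ENNReal.ofReal (U/C) := by
      rw [huU, hcC, ← ENNReal.ofReal_div_of_pos hCpos]
    have hk1val : k1 = ENNReal.ofReal ((1 + U/(2*C)) * C⁻¹) := by
      rw [hk1def, huU, hcC, h2of, ← ENNReal.ofReal_mul (by norm_num : (0:ℝ) ≤ 2),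
        ← ENNReal.ofReal_div_of_pos h2C, ← ENNReal.ofReal_one,
        ← ENNReal.ofReal_add (by norm_num) (div_nonneg hU0 h2C.le),
        ← ENNReal.ofReal_inv_of_pos hCpos,
        ← ENNReal.ofReal_mul (by positivity)]
    have hk2val : k2 = ENNReal.ofReal ((2*C)⁻¹ * C⁻¹) := by
      rw [hk2def, hcC, h2of, ← ENNReal.ofReal_mul (by norm_num : (0:ℝ) ≤ 2),
        ← ENNReal.ofReal_inv_of_pos h2C, ← ENNReal.ofReal_inv_of_pos hCpos,
        ← ENNReal.ofReal_mul (by positivity)]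
    rw [hdivval, hcC, huU, h2inv, hk1val, hk2val, hqdef,
      ← ENNReal.ofReal_mul hU0, ← ENNReal.ofReal_mul (by norm_num : (0:ℝ) ≤ 2⁻¹),
      ← ENNReal.ofReal_mul hCpos.le,
      ← ENNReal.ofReal_mul (by positivity),
      ← ENNReal.ofReal_mul (mul_nonneg (by norm_num : (0:ℝ) ≤ 2⁻¹) (mul_nonneg hU0 hCpos.le)),
      ← ENNReal.ofReal_mul (by norm_num : (0:ℝ) ≤ 3/4),
      ← ENNReal.ofReal_add (div_nonneg hU0 hCpos.le) (by positivity),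
      ← ENNReal.ofReal_add (by positivity) (by positivity)]
    apply ENNReal.ofReal_le_ofReal
    have hz : U * C^5 * (C + U - 1) = 0 := by
      rw [show C + U - 1 = 0 from by rw [hCU1]; ring]; ring
    field_simp
    ring_nf
    nlinarith [hz, hCU1, hU0, mul_nonneg hU0 hCpos.le]
  have := le_trans hchain hFIN
  exact (ENNReal.add_le_add_iff_right hKne).mp this

lemma insertNth_zero_eq_cons {n : ℕ} (x : ℝ) (W : Fin n → ℝ) :
    (MeasurableEquiv.piFinSuccAbove (fun _ : Fin (n+1) => ℝ) 0).symm (x, W) = Fin.cons x W := by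
  funext j
  induction j using Fin.cases with
  | zero => simp [MeasurableEquiv.piFinSuccAbove]
  | succ i => simp [MeasurableEquiv.piFinSuccAbove]

lemma measurable_Phi (r : ℝ) (n : ℕ) : Measurable (fun W : Fin n → ℝ => Phi r W) :=
  (measurable_nuTc r n).div (measurable_nuT r n)

lemma main_bound (r : ℝ) (hr : 0 < r) (hr2 : r ≤ 1/4) (n : ℕ) :
    ∫⁻ W, Phi r W ∂(Measure.pi fun _ : Fin n => uniformNeg11)
      ≤ (ENNReal.ofReal (3/4))^n * (ENNReal.ofReal (2*r))⁻¹ := by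
  induction n with
  | zero =>
    have hb : ∀ W : Fin 0 → ℝ, Phi r W ≤ (ENNReal.ofReal (2*r))⁻¹ := by
      intro W
      rw [Phi, ← one_div]
      exact ENNReal.div_le_div prob_le_one (cov_ge r hr hr2 W)
    calc ∫⁻ W, Phi r W ∂(Measure.pi fun _ : Fin 0 => uniformNeg11)
        ≤ ∫⁻ _, (ENNReal.ofReal (2*r))⁻¹ ∂(Measure.pi fun _ : Fin 0 => uniformNeg11) :=
          lintegral_mono hb
      _ = (ENNReal.ofReal (2*r))⁻¹ := by rw [lintegral_const, measure_univ, mul_one]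
      _ = (ENNReal.ofReal (3/4))^0 * (ENNReal.ofReal (2*r))⁻¹ := by rw [pow_zero, one_mul]
  | succ n ih =>
    have hmp := measurePreserving_piFinSuccAbove (fun _ : Fin (n+1) => uniformNeg11) 0
    set e := MeasurableEquiv.piFinSuccAbove (fun _ : Fin (n+1) => ℝ) 0 with hedef
    have h1 : ∫⁻ W, Phi r W ∂(Measure.pi fun _ : Fin (n+1) => uniformNeg11)
        = ∫⁻ z, Phi r (e.symm z)
            ∂(uniformNeg11.prod (Measure.pi fun _ : Fin n => uniformNeg11)) :=
      ((hmp.symm e).lintegral_comp_emb e.symm.measurableEmbedding (Phi r)).symm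
    have h2 : ∫⁻ z, Phi r (e.symm z)
          ∂(uniformNeg11.prod (Measure.pi fun _ : Fin n => uniformNeg11))
        = ∫⁻ W, ∫⁻ x, Phi r (e.symm (x, W)) ∂uniformNeg11
            ∂(Measure.pi fun _ : Fin n => uniformNeg11) :=
      lintegral_prod_symm _ ((measurable_Phi r (n+1)).comp e.symm.measurable).aemeasurable
    have hinner : ∀ W : Fin n → ℝ,
        ∫⁻ x, Phi r (Fin.cons x W) ∂uniformNeg11 ≤ ENNReal.ofReal (3/4) * Phi r W := by
      intro W
      have hc : nu (T r W) ≠ 0 := by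
        intro h0
        have h := cov_ge r hr hr2 W
        rw [h0, le_zero_iff, ENNReal.ofReal_eq_zero] at h
        linarith
      calc ∫⁻ x, Phi r (Fin.cons x W) ∂uniformNeg11
          = ∫⁻ x, nu (T r W ∪ {w | w - x ∈ T r W})ᶜ / nu (T r W ∪ {w | w - x ∈ T r W})
              ∂uniformNeg11 := by
            apply lintegral_congr
            intro x
            rw [Phi, T_cons]
        _ ≤ ENNReal.ofReal (3/4) * (nu (T r W)ᶜ / nu (T r W)) :=
            step (T r W) (measurableSet_T r W) hc
        _ = ENNReal.ofReal (3/4) * Phi r W := rfl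
    rw [h1, h2]
    simp_rw [hedef, insertNth_zero_eq_cons]
    calc ∫⁻ W, ∫⁻ x, Phi r (Fin.cons x W) ∂uniformNeg11
            ∂(Measure.pi fun _ : Fin n => uniformNeg11)
        ≤ ∫⁻ W, ENNReal.ofReal (3/4) * Phi r W ∂(Measure.pi fun _ : Fin n => uniformNeg11) :=
          lintegral_mono hinner
      _ = ENNReal.ofReal (3/4) * ∫⁻ W, Phi r W ∂(Measure.pi fun _ : Fin n => uniformNeg11) :=
          lintegral_const_mul' _ _ ENNReal.ofReal_ne_top
      _ ≤ ENNReal.ofReal (3/4) * ((ENNReal.ofReal (3/4))^n * (ENNReal.ofReal (2*r))⁻¹) :=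
          mul_le_mul_right ih _
      _ = (ENNReal.ofReal (3/4))^(n+1) * (ENNReal.ofReal (2*r))⁻¹ := by
          rw [pow_succ]
          ring

end RSS

lemma nbound (δ : ℝ) (hδ : 0 < δ) (hδ1 : δ ≤ 1) (n : ℕ)
    (hn : (3 / Real.log (4/3)) * Real.log (2/δ) ≤ n) : (3/4 : ℝ)^n ≤ δ^3/8 := by
  have hl : 0 < Real.log (4/3) := Real.log_pos (by norm_num)
  have h2δ : (0:ℝ) < 2/δ := by positivity
  have hkey : 3 * Real.log (2/δ) ≤ n * Real.log (4/3) := by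
    rw [div_mul_eq_mul_div, div_le_iff₀ hl] at hn
    linarith [hn]
  have h43 : ((4:ℝ)/3)^n = Real.exp (n * Real.log (4/3)) := by
    rw [Real.exp_nat_mul, Real.exp_log (show (0:ℝ) < 4/3 by norm_num)]
  have h2d3 : ((2:ℝ)/δ)^(3:ℕ) = Real.exp (3 * Real.log (2/δ)) := by
    rw [show ((3:ℝ)) = ((3:ℕ):ℝ) by norm_num, Real.exp_nat_mul, Real.exp_log h2δ]
  have hmain : ((2:ℝ)/δ)^(3:ℕ) ≤ ((4:ℝ)/3)^n := by
    rw [h43, h2d3]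
    exact Real.exp_le_exp.mpr hkey
  have hpos : (0:ℝ) < ((2:ℝ)/δ)^(3:ℕ) := by positivity
  have hinv : (3/4 : ℝ)^n = (((4:ℝ)/3)^n)⁻¹ := by
    rw [← inv_pow]
    norm_num
  rw [hinv]
  have : (((4:ℝ)/3)^n)⁻¹ ≤ (((2:ℝ)/δ)^(3:ℕ))⁻¹ := by
    exact inv_anti₀ hpos hmain
  refine this.trans ?_
  rw [div_pow]
  rw [inv_div]
  rw [div_le_div_iff₀ (by positivity) (by norm_num)]
  ring_nf
  nlinarith [pow_pos hδ 3]

/-- Lueker's random subset-sum theorem: there is an absolute constant `C` such that if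
`n ≥ C log(2/δ)` i.i.d. `Uniform[-1,1]` samples are drawn, then with probability at least
`1 - δ`, every target `W ∈ [-1/2, 1/2]` is approximated within `ε` by some subset sum. -/
theorem random_subset_sum : ∃ C : ℝ, 0 < C ∧
    ∀ ε δ : ℝ, 0 < ε → 0 < δ → δ ≤ min 1 ε →
    ∀ n : ℕ, C * Real.log (2 / δ) ≤ n →
    (Measure.pi fun _ : Fin n => uniformNeg11)
      {W : Fin n → ℝ | ∀ w ∈ Set.Icc (-(1 : ℝ)/2) (1/2),
        ∃ S : Finset (Fin n), |w - ∑ i ∈ S, W i| ≤ ε}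
      ≥ 1 - ENNReal.ofReal δ := by
  have hlog : 0 < Real.log (4/3) := Real.log_pos (by norm_num)
  refine ⟨3 / Real.log (4/3), div_pos (by norm_num) hlog, ?_⟩
  intro ε δ hε hδ hδmin n hn
  have hδ1 : δ ≤ 1 := le_trans hδmin (min_le_left _ _)
  have hδε : δ ≤ ε := le_trans hδmin (min_le_right _ _)
  set π := Measure.pi fun _ : Fin n => uniformNeg11 with hπdef
  by_cases hbig : 1/2 ≤ ε
  · have huniv : {W : Fin n → ℝ | ∀ w ∈ Set.Icc (-(1 : ℝ)/2) (1/2),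
        ∃ S : Finset (Fin n), |w - ∑ i ∈ S, W i| ≤ ε} = Set.univ := by
      ext W
      simp only [Set.mem_setOf_eq, Set.mem_univ, iff_true]
      intro w hw
      refine ⟨∅, ?_⟩
      rw [Finset.sum_empty, sub_zero, abs_le]
      obtain ⟨h1, h2⟩ := hw
      constructor <;> linarith
    rw [huniv, measure_univ]
    exact tsub_le_self
  · push_neg at hbig
    set r := ε/2 with hrdef
    have hr : 0 < r := by rw [hrdef]; linarith
    have hr2 : r ≤ 1/4 := by rw [hrdef]; linarith
    -- Markov bound on the failure event
    have hmar := mul_meas_ge_le_lintegral₀ (μ := π)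
      (RSS.measurable_Phi r n).aemeasurable (ENNReal.ofReal r)
    have hrne0 : ENNReal.ofReal r ≠ 0 := by
      rw [Ne, ENNReal.ofReal_eq_zero]
      linarith
    have hbound : π {W | ENNReal.ofReal r ≤ RSS.Phi r W} ≤ ENNReal.ofReal δ := by
      have h1 : π {W | ENNReal.ofReal r ≤ RSS.Phi r W}
          ≤ ((ENNReal.ofReal (3/4))^n * (ENNReal.ofReal (2*r))⁻¹) / ENNReal.ofReal r := by
        rw [ENNReal.le_div_iff_mul_le (Or.inl hrne0) (Or.inl ENNReal.ofReal_ne_top)]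
        calc π {W | ENNReal.ofReal r ≤ RSS.Phi r W} * ENNReal.ofReal r
            = ENNReal.ofReal r * π {W | ENNReal.ofReal r ≤ RSS.Phi r W} := mul_comm _ _
          _ ≤ ∫⁻ W, RSS.Phi r W ∂π := hmar
          _ ≤ (ENNReal.ofReal (3/4))^n * (ENNReal.ofReal (2*r))⁻¹ :=
              RSS.main_bound r hr hr2 n
      refine h1.trans ?_
      have h2r : 2*r = ε := by rw [hrdef]; ring
      have hnb : ((3:ℝ)/4)^n ≤ δ^3/8 := nbound δ hδ hδ1 n hn
      calc (ENNReal.ofReal (3/4))^n * (ENNReal.ofReal (2*r))⁻¹ / ENNReal.ofReal r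
          = ENNReal.ofReal ((3/4:ℝ)^n) * ENNReal.ofReal ε⁻¹ * ENNReal.ofReal r⁻¹ := by
            rw [h2r, div_eq_mul_inv, ← ENNReal.ofReal_pow (by norm_num),
              ← ENNReal.ofReal_inv_of_pos hε, ← ENNReal.ofReal_inv_of_pos hr]
        _ = ENNReal.ofReal ((3/4:ℝ)^n * ε⁻¹ * r⁻¹) := by
            rw [← ENNReal.ofReal_mul (by positivity), ← ENNReal.ofReal_mul (by positivity)]
        _ ≤ ENNReal.ofReal δ := by
            apply ENNReal.ofReal_le_ofReal
            have hrεle : (3/4:ℝ)^n * ε⁻¹ * r⁻¹ ≤ (δ^3/8) * ε⁻¹ * r⁻¹ := by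
              have h1 : (0:ℝ) ≤ ε⁻¹ := by positivity
              have h2 : (0:ℝ) ≤ r⁻¹ := by positivity
              apply mul_le_mul_of_nonneg_right _ h2
              exact mul_le_mul_of_nonneg_right hnb h1
            refine hrεle.trans ?_
            rw [hrdef]
            rw [show (δ^3/8) * ε⁻¹ * (ε/2)⁻¹ = δ^3/(4*ε^2) by field_simp; ring]
            rw [div_le_iff₀ (by positivity)]
            have hkey : δ*(δ*δ) ≤ δ*(ε*ε) :=
              mul_le_mul_of_nonneg_left (mul_self_le_mul_self hδ.le hδε) hδ.le
            nlinarith [hkey, mul_nonneg hδ.le (mul_nonneg hε.le hε.le)]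
    -- geometric inclusion: small uncovered measure implies full ε-covering
    have hincl : {W : Fin n → ℝ | RSS.nu (RSS.T r W)ᶜ < ENNReal.ofReal r}
        ⊆ {W : Fin n → ℝ | ∀ w ∈ Set.Icc (-(1 : ℝ)/2) (1/2),
            ∃ S : Finset (Fin n), |w - ∑ i ∈ S, W i| ≤ ε} := by
      intro W hW w hw
      obtain ⟨hw1, hw2⟩ := hw
      set Jw : Set ℝ := if 0 ≤ w then Set.Icc (w - r) w else Set.Icc w (w + r) with hJdef
      have hJsub : Jw ⊆ RSS.II := by
        rw [hJdef]
        split_ifs with h0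
        · intro y hy
          exact ⟨by simp only [Set.mem_Icc] at hy ⊢; linarith [hy.1],
            by simp only [Set.mem_Icc] at hy ⊢; linarith [hy.2]⟩
        · push_neg at h0
          intro y hy
          exact ⟨by simp only [Set.mem_Icc] at hy ⊢; linarith [hy.1],
            by simp only [Set.mem_Icc] at hy ⊢; linarith [hy.2]⟩
      have hJvol : volume Jw = ENNReal.ofReal r := by
        rw [hJdef]
        split_ifs <;> rw [Real.volume_Icc] <;> congr 1 <;> ring
      have hnot : ¬ (Jw ⊆ (RSS.T r W)ᶜ ∩ RSS.II) := by
        intro hcon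
        have : volume Jw ≤ RSS.nu (RSS.T r W)ᶜ := by
          rw [RSS.nu, Measure.restrict_apply (RSS.measurableSet_T r W).compl]
          exact measure_mono hcon
        rw [hJvol] at this
        exact absurd (lt_of_le_of_lt this hW) (lt_irrefl _)
      obtain ⟨w', hw'J, hw'n⟩ := Set.not_subset.mp hnot
      have hw'T : w' ∈ RSS.T r W := by
        by_contra hcon
        exact hw'n ⟨hcon, hJsub hw'J⟩
      obtain ⟨S, hS⟩ := hw'T
      refine ⟨S, ?_⟩
      have hww' : |w - w'| ≤ r := by
        rw [hJdef] at hw'J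
        rw [abs_le]
        split_ifs at hw'J with h0
        · obtain ⟨h1, h2⟩ := hw'J
          constructor <;> linarith
        · obtain ⟨h1, h2⟩ := hw'J
          constructor <;> linarith
      calc |w - ∑ i ∈ S, W i| = |(w - w') + (w' - ∑ i ∈ S, W i)| := by ring_nf
        _ ≤ |w - w'| + |w' - ∑ i ∈ S, W i| := abs_add_le _ _
        _ ≤ r + r := add_le_add hww' hS
        _ = ε := by rw [hrdef]; ring
    -- relate the uncovered-measure event to the Phi event
    have hincl2 : {W : Fin n → ℝ | ENNReal.ofReal r ≤ RSS.nu (RSS.T r W)ᶜ}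
        ⊆ {W : Fin n → ℝ | ENNReal.ofReal r ≤ RSS.Phi r W} := by
      intro W hW
      have hW' : ENNReal.ofReal r ≤ RSS.nu (RSS.T r W)ᶜ := hW
      refine le_trans hW' ?_
      have h := ENNReal.div_le_div (le_refl (RSS.nu (RSS.T r W)ᶜ))
        (prob_le_one (μ := RSS.nu) (s := RSS.T r W))
      rw [div_one] at h
      exact h
    have hsm : MeasurableSet {W : Fin n → ℝ | ENNReal.ofReal r ≤ RSS.nu (RSS.T r W)ᶜ} :=
      measurableSet_le measurable_const (RSS.measurable_nuTc r n)
    have hcompl : π {W : Fin n → ℝ | ENNReal.ofReal r ≤ RSS.nu (RSS.T r W)ᶜ}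
        ≤ ENNReal.ofReal δ := le_trans (measure_mono hincl2) hbound
    have hceq : {W : Fin n → ℝ | RSS.nu (RSS.T r W)ᶜ < ENNReal.ofReal r}
        = {W : Fin n → ℝ | ENNReal.ofReal r ≤ RSS.nu (RSS.T r W)ᶜ}ᶜ := by
      ext W
      simp [not_le]
    rw [ge_iff_le]
    calc (1:ℝ≥0∞) - ENNReal.ofReal δ
        ≤ 1 - π {W : Fin n → ℝ | ENNReal.ofReal r ≤ RSS.nu (RSS.T r W)ᶜ} :=
          tsub_le_tsub_left hcompl 1
      _ = π {W : Fin n → ℝ | ENNReal.ofReal r ≤ RSS.nu (RSS.T r W)ᶜ}ᶜ :=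
          (prob_compl_eq_one_sub hsm).symm
      _ = π {W : Fin n → ℝ | RSS.nu (RSS.T r W)ᶜ < ENNReal.ofReal r} := by rw [hceq]
      _ ≤ π {W : Fin n → ℝ | ∀ w ∈ Set.Icc (-(1 : ℝ)/2) (1/2),
            ∃ S : Finset (Fin n), |w - ∑ i ∈ S, W i| ≤ ε} := measure_mono hincl
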